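/- Let K be an algebraically closed field, R = K[u_1,…,u_m, x_1,…,x_n], and let H be an ideal of R with H ∩ K[u] = (0) and with Krull dimension of R/H equal to m (the number of u-variables), and let T ∈ R. Then (H + (T)) ∩ K[u] = (0) if and only if there exists a minimal prime p over H with p ∩ K[u] = (0) and T ∈ p; that is, if and only if T vanishes identically on some irreducible component of V(H) where the u-variables remain independent. -/

import Mathlib

open MvPolynomial nonZeroDivisors

universe v

lemma aux_not_isField_of_transcendental
    {L B : Type*} [Field L] [CommRing B] [Nontrivial B] (g : L →+* B)
    (hfg : g.FiniteType)
    (t : B) (ht : ∀ P : Polynomial L, Polynomial.eval₂ g t P = 0 → P = 0) :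
    ¬ IsField B := by
  intro hf
  letI : Field B := hf.toField
  have hfin : g.Finite := (RingHom.finite_iff_finiteType_of_isJacobsonRing).mpr hfg
  obtain ⟨P, hmonic, hP⟩ := hfin.to_isIntegral t
  exact hmonic.ne_zero (ht P hP)

lemma aux_exists_chain {K : Type*} [Field K] :
    ∀ (m : ℕ) (A : Type v) [CommRing A] [IsDomain A] [Algebra K A],
      Algebra.FiniteType K A → ∀ ψ : MvPolynomial (Fin m) K →ₐ[K] A, Function.Injective ψ →
      ∃ c : Fin (m + 1) → Ideal A, StrictMono c ∧ (∀ i, (c i).IsPrime) ∧ c 0 = ⊥ := by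
  intro m
  induction m with
  | zero =>
    intro A _ _ _ _ _ _
    exact ⟨fun _ => ⊥, fun i j h => absurd (Fin.lt_def.mp h) (by omega),
      fun _ => Ideal.bot_prime, rfl⟩
  | succ m IH =>
    intro A _ _ _ hfg ψ hψ
    -- the sub-polynomial-ring on the first m variables
    set ψ' : MvPolynomial (Fin m) K →ₐ[K] A := ψ.comp (rename Fin.succ) with hψ'def
    have hψ' : Function.Injective ψ' := hψ.comp (rename_injective _ (Fin.succ_injective m))
    set S : Submonoid A := Submonoid.map ψ'.toRingHom.toMonoidHom
        (MvPolynomial (Fin m) K)⁰ with hSdef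
    have hS : S ≤ A⁰ := by
      rintro _ ⟨f, hf, rfl⟩
      refine mem_nonZeroDivisors_of_ne_zero (fun h0 => ?_)
      exact mem_nonZeroDivisors_iff_ne_zero.mp hf (hψ' (by simpa using h0))
    set B := Localization S with hBdef
    letI : IsDomain B := IsLocalization.isDomain_localization hS
    set L := FractionRing (MvPolynomial (Fin m) K) with hLdef
    set g : MvPolynomial (Fin m) K →+* B := (algebraMap A B).comp ψ'.toRingHom with hgdef
    have hg : ∀ y : (MvPolynomial (Fin m) K)⁰, IsUnit (g y) := by
      intro y
      exact IsLocalization.map_units (M := S) B ⟨ψ' y, ⟨(y : MvPolynomial (Fin m) K), y.2, rfl⟩⟩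
    set g' : L →+* B := IsLocalization.lift hg with hg'def
    have hg'c : ∀ f, g' (algebraMap (MvPolynomial (Fin m) K) L f) = g f := fun f =>
      IsLocalization.lift_eq hg f
    set t : B := algebraMap A B (ψ (X 0)) with htdef
    have hinj : Function.Injective (algebraMap A B) := IsLocalization.injective B hS
    -- t is transcendental over L
    have key : ∀ Q : Polynomial (MvPolynomial (Fin m) K),
        Polynomial.eval₂ ψ'.toRingHom (ψ (X 0)) Q = ψ ((finSuccEquiv K m).symm Q) := by
      have h1 : (Polynomial.eval₂RingHom ψ'.toRingHom (ψ (X 0))) =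
          ψ.toRingHom.comp ((finSuccEquiv K m).symm :
            Polynomial (MvPolynomial (Fin m) K) →+* MvPolynomial (Fin (m+1)) K) := by
        apply Polynomial.ringHom_ext
        · intro a
          have : (finSuccEquiv K m).symm (Polynomial.C a) = rename Fin.succ a := by
            rw [AlgEquiv.symm_apply_eq]
            induction a using MvPolynomial.induction_on with
            | C r => simp [finSuccEquiv_apply]
            | add p q hp hq => simp [hp, hq]
            | mul_X p i hp => simp [hp, finSuccEquiv_X_succ]
          simp [this, hψ'def]
        · have : (finSuccEquiv K m).symm Polynomial.X = X 0 := by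
            rw [AlgEquiv.symm_apply_eq, finSuccEquiv_X_zero]
          simp [this]
      intro Q
      have := DFunLike.congr_fun h1 Q
      simpa using this
    have ht : ∀ P : Polynomial L, Polynomial.eval₂ g' t P = 0 → P = 0 := by
      intro P hP
      by_contra hP0
      set Q := IsLocalization.integerNormalization (MvPolynomial (Fin m) K)⁰ P with hQdef
      have hQ0 : Q ≠ 0 := fun h =>
        hP0 (IsFractionRing.integerNormalization_eq_zero_iff.mp h)
      have hQ : Polynomial.eval₂ (g'.comp (algebraMap (MvPolynomial (Fin m) K) L)) t Q = 0 :=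
        IsLocalization.integerNormalization_eval₂_eq_zero _ g' P hP
      have hcomp : g'.comp (algebraMap (MvPolynomial (Fin m) K) L) = g :=
        IsLocalization.lift_comp hg
      rw [hcomp] at hQ
      have h2 : algebraMap A B (Polynomial.eval₂ ψ'.toRingHom (ψ (X 0)) Q) = 0 := by
        rw [Polynomial.hom_eval₂]; exact hQ
      have h3 : Polynomial.eval₂ ψ'.toRingHom (ψ (X 0)) Q = 0 := by
        apply hinj; rw [h2, map_zero]
      rw [key] at h3
      have h4 : (finSuccEquiv K m).symm Q = 0 := hψ (by simpa using h3)
      exact hQ0 ((finSuccEquiv K m).symm.injective (by simpa using h4))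
    -- B is of finite type over L
    have hBfg : g'.FiniteType := by
      classical
      obtain ⟨s, hs⟩ := hfg.out
      letI : Algebra L B := g'.toAlgebra
      refine ⟨⟨s.image (algebraMap A B), ?_⟩⟩
      rw [eq_top_iff]
      rintro b -
      set TT := Algebra.adjoin L ((s.image (algebraMap A B) : Finset B) : Set B) with hTT
      show b ∈ TT
      have halg : ∀ z : L, g' z ∈ TT := fun z => Subalgebra.algebraMap_mem TT z
      have hstep1 : ∀ a : A, algebraMap A B a ∈ TT := by
        intro a
        have ha : a ∈ Algebra.adjoin K (s : Set A) := by rw [hs]; trivial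
        induction ha using Algebra.adjoin_induction with
        | mem x hx =>
          exact Algebra.subset_adjoin (by
            simp only [Finset.coe_image]
            exact Set.mem_image_of_mem _ hx)
        | algebraMap r =>
          have : algebraMap K A r = ψ' (C r) := by
            rw [← ψ'.commutes r]; simp [algebraMap_eq]
          rw [this]
          have : algebraMap A B (ψ' (C r)) = g (C r) := rfl
          rw [this, ← hg'c]
          exact halg _
        | add x y hx hy hx' hy' => rw [map_add]; exact add_mem hx' hy'
        | mul x y hx hy hx' hy' => rw [map_mul]; exact mul_mem hx' hy'
      obtain ⟨⟨a, u⟩, hau⟩ := IsLocalization.mk'_surjective S b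
      have hau : IsLocalization.mk' B a u = b := hau
      obtain ⟨f, hf, hfu⟩ := u.2
      have hinvu : IsUnit (algebraMap (MvPolynomial (Fin m) K) L f) :=
        IsLocalization.map_units L ⟨f, hf⟩
      have hzu : g' (((hinvu.unit⁻¹ : Lˣ) : L)) * algebraMap A B (ψ' f) = 1 := by
        have h5 : algebraMap A B (ψ' f) = g' (algebraMap (MvPolynomial (Fin m) K) L f) := by
          rw [hg'c]; rfl
        rw [h5, ← map_mul, hinvu.val_inv_mul]
        exact map_one g'
      set z : B := g' (((hinvu.unit⁻¹ : Lˣ) : L)) with hz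
      have hb : b = algebraMap A B a * z := by
        have hspec := IsLocalization.mk'_spec B a u
        rw [hau] at hspec
        calc b = b * (algebraMap A B (u : A) * z) := by
                rw [show (algebraMap A B (u : A) * z) = 1 by rw [mul_comm, ← hfu]; exact hzu,
                  mul_one]
          _ = (b * algebraMap A B (u : A)) * z := by ring
          _ = algebraMap A B a * z := by rw [hspec]
      rw [hb]
      exact mul_mem (hstep1 a) (halg _)
    -- B is not a field, so there is a nonzero prime of A disjoint from S
    have hnf : ¬ IsField B := aux_not_isField_of_transcendental g' hBfg t ht
    obtain ⟨I, hIbot, hItop⟩ := (Ring.not_isField_iff_exists_ideal_bot_lt_and_lt_top).mp hnf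
    obtain ⟨M, hM, hIM⟩ := Ideal.exists_le_maximal I (ne_top_of_lt hItop)
    set P : Ideal A := M.comap (algebraMap A B) with hPdef
    haveI hMp : M.IsPrime := hM.isPrime
    haveI hPp : P.IsPrime := Ideal.IsPrime.comap _
    have hPne : P ≠ ⊥ := by
      obtain ⟨b, hbI, hbne⟩ := Submodule.exists_mem_ne_zero_of_ne_bot (ne_bot_of_gt hIbot)
      obtain ⟨⟨a, u⟩, hau⟩ := IsLocalization.mk'_surjective S b
      have hau : IsLocalization.mk' B a u = b := hau
      have hane : a ≠ 0 := by
        rintro rfl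
        rw [IsLocalization.mk'_zero] at hau
        exact hbne hau.symm
      have haM : algebraMap A B a ∈ M := by
        have hspec := IsLocalization.mk'_spec B a u
        rw [hau] at hspec
        rw [← hspec]
        exact M.mul_mem_right _ (hIM hbI)
      intro hPbot
      have : a ∈ P := Ideal.mem_comap.mpr haM
      rw [hPbot] at this
      exact hane (by simpa using this)
    have hPS : ∀ f : MvPolynomial (Fin m) K, f ≠ 0 → ψ' f ∉ P := by
      intro f hf hfP
      have : IsUnit (algebraMap A B (ψ' f)) :=
        IsLocalization.map_units (M := S) B ⟨ψ' f, ⟨f, mem_nonZeroDivisors_of_ne_zero hf, rfl⟩⟩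
      exact hM.ne_top (M.eq_top_of_isUnit_mem hfP this)
    -- pass to the quotient A ⧸ P and use the induction hypothesis
    letI : IsDomain (A ⧸ P) := Ideal.Quotient.isDomain P
    have hfg' : Algebra.FiniteType K (A ⧸ P) :=
      by haveI := hfg; exact Algebra.FiniteType.of_surjective (Ideal.Quotient.mkₐ K P) (Ideal.Quotient.mkₐ_surjective K P)
    set ψ'' : MvPolynomial (Fin m) K →ₐ[K] A ⧸ P := (Ideal.Quotient.mkₐ K P).comp ψ' with hψ''
    have hψ''inj : Function.Injective ψ'' := by
      rw [injective_iff_map_eq_zero]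
      intro f hf0
      by_contra hf
      exact hPS f hf (by
        have : Ideal.Quotient.mk P (ψ' f) = 0 := hf0
        rwa [Ideal.Quotient.eq_zero_iff_mem] at this)
    obtain ⟨c', hc'mono, hc'prime, hc'0⟩ := IH (A ⧸ P) hfg' ψ'' hψ''inj
    -- assemble the chain
    refine ⟨Fin.cons ⊥ (fun i => (c' i).comap (Ideal.Quotient.mk P)), ?_, ?_, ?_⟩
    · have hmono' : StrictMono (fun i : Fin (m+1) => (c' i).comap (Ideal.Quotient.mk P)) := by
        intro i j hij
        refine lt_of_le_of_ne (Ideal.comap_mono (hc'mono hij).le) (fun h => ?_)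
        exact (hc'mono hij).ne
          (Ideal.comap_injective_of_surjective _ Ideal.Quotient.mk_surjective h)
      have hbotP : (⊥ : Ideal A) < (c' 0).comap (Ideal.Quotient.mk P) := by
        rw [hc'0]
        have : ((⊥ : Ideal (A ⧸ P)).comap (Ideal.Quotient.mk P)) = P := by
          rw [← RingHom.ker_eq_comap_bot, Ideal.mk_ker]
        rw [this]
        exact bot_lt_iff_ne_bot.mpr hPne
      rw [Fin.strictMono_iff_lt_succ]
      intro i
      refine Fin.cases ?_ (fun i' => ?_) i
      · simpa using hbotP
      · have h1 : (Fin.succ i').castSucc = (i'.castSucc).succ := rfl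
        rw [h1, Fin.cons_succ, Fin.cons_succ]
        exact hmono' (Fin.castSucc_lt_succ (i := i'))
    · intro i
      refine Fin.cases ?_ (fun i' => ?_) i
      · rw [Fin.cons_zero]; exact Ideal.bot_prime
      · rw [Fin.cons_succ]; haveI := hc'prime i'; exact Ideal.IsPrime.comap _
    · simp


/-- With u independent for H and dim R/H = m, we have (H + (T)) ∩ K[u] = 0 iff T vanishes
identically on some irreducible component of V(H) where the u-variables remain
independent, i.e. iff T lies in some minimal prime p over H with p ∩ K[u] = 0. -/
theorem stmt_5 {K : Type*} [Field K] [IsAlgClosed K] {m n : ℕ}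
    (H : Ideal (MvPolynomial (Fin m ⊕ Fin n) K))
    (T : MvPolynomial (Fin m ⊕ Fin n) K)
    (hind : H.comap (MvPolynomial.rename (Sum.inl : Fin m → Fin m ⊕ Fin n)).toRingHom = ⊥)
    (hdim : ringKrullDim (MvPolynomial (Fin m ⊕ Fin n) K ⧸ H) = (m : ℕ)) :
    (H + Ideal.span {T}).comap
        (MvPolynomial.rename (Sum.inl : Fin m → Fin m ⊕ Fin n)).toRingHom = ⊥ ↔
      ∃ p ∈ H.minimalPrimes,
        p.comap (MvPolynomial.rename (Sum.inl : Fin m → Fin m ⊕ Fin n)).toRingHom = ⊥ ∧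
          T ∈ p := by
  set φ : MvPolynomial (Fin m) K →+* MvPolynomial (Fin m ⊕ Fin n) K :=
    (MvPolynomial.rename (Sum.inl : Fin m → Fin m ⊕ Fin n)).toRingHom with hφdef
  have hφinj : Function.Injective φ := rename_injective _ Sum.inl_injective
  constructor
  · intro hc
    set S : Submonoid (MvPolynomial (Fin m ⊕ Fin n) K) := Submonoid.map φ.toMonoidHom ((MvPolynomial (Fin m) K)⁰) with hSdef
    have hdisj : Disjoint ((H + Ideal.span {T} : Ideal (MvPolynomial (Fin m ⊕ Fin n) K)) : Set (MvPolynomial (Fin m ⊕ Fin n) K)) (S : Set (MvPolynomial (Fin m ⊕ Fin n) K)) := by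
      rw [Set.disjoint_left]
      rintro x hx ⟨f, hf, rfl⟩
      have hmem : f ∈ (H + Ideal.span {T}).comap φ := Ideal.mem_comap.mpr hx
      rw [hc] at hmem
      exact mem_nonZeroDivisors_iff_ne_zero.mp hf (by simpa using hmem)
    obtain ⟨q, hqprime, hq_le, hqdisj⟩ := Ideal.exists_le_prime_disjoint _ S hdisj
    have hqc : q.comap φ = ⊥ := by
      rw [eq_bot_iff]
      intro f hfq
      rw [Ideal.mem_comap] at hfq
      simp only [Ideal.mem_bot]
      by_contra hf0
      exact Set.disjoint_left.mp hqdisj hfq ⟨f, mem_nonZeroDivisors_of_ne_zero hf0, rfl⟩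
    have hHq : H ≤ q := le_trans le_sup_left hq_le
    obtain ⟨p, hpmin, hpq⟩ := Ideal.exists_minimalPrimes_le hHq
    have hpc : p.comap φ = ⊥ := eq_bot_iff.mpr (hqc ▸ Ideal.comap_mono hpq)
    refine ⟨p, hpmin, hpc, ?_⟩
    by_contra hTp
    have hTq : T ∈ q := hq_le (le_sup_right (a := H) (Ideal.subset_span rfl))
    have hplt : p < q := lt_of_le_of_ne hpq (fun h => hTp (h ▸ hTq))
    haveI hqP : q.IsPrime := hqprime
    letI : IsDomain (MvPolynomial (Fin m ⊕ Fin n) K ⧸ q) := Ideal.Quotient.isDomain q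
    have hfgq : Algebra.FiniteType K (MvPolynomial (Fin m ⊕ Fin n) K ⧸ q) :=
      Algebra.FiniteType.of_surjective
        (Ideal.Quotient.mkₐ K q) (Ideal.Quotient.mkₐ_surjective K q)
    set ψ : MvPolynomial (Fin m) K →ₐ[K] (MvPolynomial (Fin m ⊕ Fin n) K ⧸ q) :=
      (Ideal.Quotient.mkₐ K q).comp (rename Sum.inl) with hψdef
    have hψinj : Function.Injective ψ := by
      rw [injective_iff_map_eq_zero]
      intro f hf0
      have : φ f ∈ q := by
        rw [← Ideal.Quotient.eq_zero_iff_mem]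
        exact hf0
      have : f ∈ q.comap φ := Ideal.mem_comap.mpr this
      rwa [hqc, Ideal.mem_bot] at this
    obtain ⟨c, hcmono, hcprime, hc0⟩ := aux_exists_chain m (MvPolynomial (Fin m ⊕ Fin n) K ⧸ q) hfgq ψ hψinj
    set d : Fin (m + 2) → Ideal (MvPolynomial (Fin m ⊕ Fin n) K) :=
      Fin.cons p (fun i => (c i).comap (Ideal.Quotient.mk q)) with hddef
    have hcomap0 : ((⊥ : Ideal (MvPolynomial (Fin m ⊕ Fin n) K ⧸ q)).comap (Ideal.Quotient.mk q)) = q := by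
      rw [← RingHom.ker_eq_comap_bot, Ideal.mk_ker]
    have hqd : ∀ i, q ≤ (c i).comap (Ideal.Quotient.mk q) := by
      intro i
      exact le_trans (le_of_eq hcomap0.symm)
        (Ideal.comap_mono (hc0 ▸ hcmono.monotone (Fin.zero_le i)))
    have hHd : ∀ i, H ≤ d i := by
      intro i
      refine Fin.cases ?_ (fun i' => ?_) i
      · rw [hddef, Fin.cons_zero]; exact hpmin.1.2
      · rw [hddef, Fin.cons_succ]; exact le_trans hHq (hqd i')
    have hdprime : ∀ i, (d i).IsPrime := by
      intro i
      refine Fin.cases ?_ (fun i' => ?_) i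
      · rw [hddef, Fin.cons_zero]; exact hpmin.1.1
      · rw [hddef, Fin.cons_succ]; haveI := hcprime i'; exact Ideal.IsPrime.comap _
    have hdmono : StrictMono d := by
      have hmono' : StrictMono (fun i : Fin (m+1) => (c i).comap (Ideal.Quotient.mk q)) := by
        intro i j hij
        refine lt_of_le_of_ne (Ideal.comap_mono (hcmono hij).le) (fun h => ?_)
        exact (hcmono hij).ne
          (Ideal.comap_injective_of_surjective _ Ideal.Quotient.mk_surjective h)
      rw [Fin.strictMono_iff_lt_succ]
      intro i
      refine Fin.cases ?_ (fun i' => ?_) i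
      · have : d (Fin.succ 0) = (c 0).comap (Ideal.Quotient.mk q) := by
          rw [hddef, Fin.cons_succ]
        rw [show (Fin.castSucc 0 : Fin (m+2)) = 0 from rfl, this, hc0, hcomap0, hddef,
          Fin.cons_zero]
        exact hplt
      · have h1 : (Fin.succ i').castSucc = (i'.castSucc).succ := rfl
        rw [h1, hddef, Fin.cons_succ, Fin.cons_succ]
        exact hmono' (Fin.castSucc_lt_succ (i := i'))
    have hker : RingHom.ker (Ideal.Quotient.mk H) = H := Ideal.mk_ker
    have hdprime2 : ∀ i, ((d i).map (Ideal.Quotient.mk H)).IsPrime := fun i =>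
      haveI := hdprime i
      Ideal.map_isPrime_of_surjective Ideal.Quotient.mk_surjective (by rw [hker]; exact hHd i)
    have hmapmono : ∀ {i j : Fin (m+2)}, i < j →
        (d i).map (Ideal.Quotient.mk H) < (d j).map (Ideal.Quotient.mk H) := by
      intro i j hij
      refine lt_of_le_of_ne (Ideal.map_mono (hdmono hij).le) (fun h => (hdmono hij).ne ?_)
      have hi := Ideal.comap_map_of_surjective (Ideal.Quotient.mk H) Ideal.Quotient.mk_surjective (d i)
      have hj := Ideal.comap_map_of_surjective (Ideal.Quotient.mk H) Ideal.Quotient.mk_surjective (d j)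
      have hker2 : ((⊥ : Ideal (MvPolynomial (Fin m ⊕ Fin n) K ⧸ H)).comap
          (Ideal.Quotient.mk H)) = H := by
        rw [← RingHom.ker_eq_comap_bot, Ideal.mk_ker]
      have := congrArg (Ideal.comap (Ideal.Quotient.mk H)) h
      rw [hi, hj, hker2, sup_eq_left.mpr (hHd i), sup_eq_left.mpr (hHd j)] at this
      exact this
    let series : LTSeries (PrimeSpectrum (MvPolynomial (Fin m ⊕ Fin n) K ⧸ H)) :=
      ⟨m + 1, fun i => ⟨(d i).map (Ideal.Quotient.mk H), hdprime2 i⟩, fun i => by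
        change (_ : PrimeSpectrum (MvPolynomial (Fin m ⊕ Fin n) K ⧸ H)) < _
        rw [← PrimeSpectrum.asIdeal_lt_asIdeal]
        exact hmapmono (Fin.castSucc_lt_succ (i := i))⟩
    have hlen := Order.LTSeries.length_le_krullDim series
    have hlen' : ((m + 1 : ℕ) : WithBot (WithTop ℕ)) ≤ ((m : ℕ) : WithBot (WithTop ℕ)) := by
      have h2 : ((m + 1 : ℕ) : WithBot ℕ∞) ≤ ((m : ℕ) : WithBot ℕ∞) := hlen.trans_eq hdim
      exact_mod_cast h2
    have : (m + 1 : ℕ) ≤ (m : ℕ) := by exact_mod_cast hlen'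
    omega
  · rintro ⟨p, hpmin, hpc, hTp⟩
    have hle : H + Ideal.span {T} ≤ p :=
      sup_le hpmin.1.2 (Ideal.span_le.mpr (by simpa using hTp))
    rw [eq_bot_iff, ← hpc]
    exact Ideal.comap_mono hle
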